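/- Let α, β ∈ (0,1), let f ∈ L¹(G_m²), and let n, m, r, s be nonnegative integers with M_{r+1} − 1 ≤ n and M_{s+1} − 1 ≤ m. Then for almost every (x,y) ∈ G_m², ∫_{G_m²} Σ_{i=M_r}^{M_{r+1}−1} Σ_{j=M_s}^{M_{s+1}−1} A_{n−i+1}^{−α−1} A_{m−j+1}^{−β−1} D_i(u) D_j(v) [ S_{M_r,M_s}(x−u, y−v, f) − S_{M_r,M_s}(x, y, f) ] dμ(u,v) = 0. -/

import Mathlib

open MeasureTheory Filter Finset
open scoped ENNReal NNReal Real

noncomputable section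

namespace Vilenkin

/-- The bounded Vilenkin group: complete direct product of the cyclic groups `ZMod (m k)`. -/
abbrev G (m : ℕ → ℕ) : Type := ∀ k, ZMod (m k)

/-- The generalized number system `M 0 = 1`, `M (k+1) = m k * M k`. -/
def M (m : ℕ → ℕ) : ℕ → ℕ
  | 0 => 1
  | k + 1 => m k * M m k

/-- The cylinder neighbourhood `I n = {x | x 0 = ⋯ = x (n-1) = 0}`. -/
def I (m : ℕ → ℕ) (n : ℕ) : Set (G m) := {x | ∀ j < n, x j = 0}

/-- The `j`-th digit of `n` in the generalized number system based on `m`. -/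
def digit (m : ℕ → ℕ) (n j : ℕ) : ℕ := n / M m j % m j

/-- The generalized Rademacher functions `r k x = exp (2 π i x_k / m_k)`. -/
def rad (m : ℕ → ℕ) (k : ℕ) (x : G m) : ℂ :=
  Complex.exp (2 * Real.pi * Complex.I * ((x k).val : ℂ) / (m k : ℂ))

/-- The Vilenkin system `ψ n = ∏ k, (r k) ^ (n_k)`. -/
def psi (m : ℕ → ℕ) (n : ℕ) (x : G m) : ℂ :=
  ∏ k ∈ Finset.range (n + 1), rad m k x ^ digit m n k

/-- The Vilenkin-Dirichlet kernels `D n = ∑_{k<n} ψ k`. -/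
def D (m : ℕ → ℕ) (n : ℕ) (x : G m) : ℂ := ∑ k ∈ Finset.range n, psi m k x

/-- The Cesàro numbers `A n α = (α+1)⋯(α+n)/n!`. -/
def A (α : ℝ) (n : ℕ) : ℝ := (∏ i ∈ Finset.range n, (α + (i + 1))) / (n.factorial : ℝ)

/-- One-dimensional Vilenkin-Fourier coefficients. -/
def fhat1 (m : ℕ → ℕ) (μ : Measure (G m)) (f : G m → ℂ) (i : ℕ) : ℂ :=
  ∫ x, f x * (starRingEnd ℂ) (psi m i x) ∂μ

/-- One-dimensional `(C,-α)` Cesàro means of the Vilenkin-Fourier series. -/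
def cesaro1 (m : ℕ → ℕ) (μ : Measure (G m)) (α : ℝ) (f : G m → ℂ) (n : ℕ) (x : G m) : ℂ :=
  ((A (-α) n : ℝ) : ℂ)⁻¹ *
    ∑ i ∈ Finset.range (n + 1), ((A (-α) (n - i) : ℝ) : ℂ) * fhat1 m μ f i * psi m i x

/-- Double Vilenkin-Fourier coefficients. -/
def fhat2 (m : ℕ → ℕ) (μ : Measure (G m)) (f : G m × G m → ℂ) (i j : ℕ) : ℂ :=
  ∫ z, f z * (starRingEnd ℂ) (psi m i z.1) * (starRingEnd ℂ) (psi m j z.2) ∂(μ.prod μ)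

/-- Rectangular partial sums of the double Vilenkin-Fourier series. -/
def partialSum2 (m : ℕ → ℕ) (μ : Measure (G m)) (f : G m × G m → ℂ) (n₁ n₂ : ℕ)
    (z : G m × G m) : ℂ :=
  ∑ k₁ ∈ Finset.range n₁, ∑ k₂ ∈ Finset.range n₂,
    fhat2 m μ f k₁ k₂ * psi m k₁ z.1 * psi m k₂ z.2

/-- The `(C,-α,-β)` means of the double Vilenkin-Fourier series. -/
def cesaro2 (m : ℕ → ℕ) (μ : Measure (G m)) (α β : ℝ) (f : G m × G m → ℂ) (n₁ n₂ : ℕ)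
    (z : G m × G m) : ℂ :=
  ((A (-α) n₁ * A (-β) n₂ : ℝ) : ℂ)⁻¹ *
    ∑ i ∈ Finset.range (n₁ + 1), ∑ j ∈ Finset.range (n₂ + 1),
      ((A (-α) (n₁ - i) * A (-β) (n₂ - j) : ℝ) : ℂ) * fhat2 m μ f i j * psi m i z.1 * psi m j z.2

/-- One-dimensional modulus of continuity in `L^p`. -/
def omegaOne (m : ℕ → ℕ) (μ : Measure (G m)) (p : ℝ≥0∞) (f : G m → ℂ) (n : ℕ) : ℝ≥0∞ :=
  ⨆ u ∈ I m n, eLpNorm (fun x => f (x - u) - f x) p μ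

/-- First partial modulus of continuity in `L^p`. -/
def omega1 (m : ℕ → ℕ) (μ : Measure (G m)) (p : ℝ≥0∞) (f : G m × G m → ℂ) (n : ℕ) : ℝ≥0∞ :=
  ⨆ u ∈ I m n, eLpNorm (fun z => f (z.1 - u, z.2) - f z) p (μ.prod μ)

/-- Second partial modulus of continuity in `L^p`. -/
def omega2 (m : ℕ → ℕ) (μ : Measure (G m)) (p : ℝ≥0∞) (f : G m × G m → ℂ) (n : ℕ) : ℝ≥0∞ :=
  ⨆ v ∈ I m n, eLpNorm (fun z => f (z.1, z.2 - v) - f z) p (μ.prod μ)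

/-- Mixed modulus of continuity in `L^p`. -/
def omega12 (m : ℕ → ℕ) (μ : Measure (G m)) (p : ℝ≥0∞) (f : G m × G m → ℂ) (n l : ℕ) : ℝ≥0∞ :=
  ⨆ u ∈ I m n, ⨆ v ∈ I m l,
    eLpNorm (fun z => f (z.1 - u, z.2 - v) - f (z.1 - u, z.2) - f (z.1, z.2 - v) + f z) p
      (μ.prod μ)

/-- Total modulus of continuity in `L^p`. -/
def omegaT (m : ℕ → ℕ) (μ : Measure (G m)) (p : ℝ≥0∞) (f : G m × G m → ℂ) (n : ℕ) : ℝ≥0∞ :=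
  ⨆ u ∈ I m n, ⨆ v ∈ I m n, eLpNorm (fun z => f (z.1 - u, z.2 - v) - f z) p (μ.prod μ)

/-- Total modulus of continuity in the uniform norm. -/
def omegaC (m : ℕ → ℕ) (f : G m × G m → ℂ) (n : ℕ) : ℝ≥0∞ :=
  ⨆ u ∈ I m n, ⨆ v ∈ I m n, ⨆ z : G m × G m, (‖f (z.1 - u, z.2 - v) - f z‖₊ : ℝ≥0∞)


section Aux
variable {m : ℕ → ℕ}

lemma M_pos (hm2 : ∀ k, 2 ≤ m k) (N : ℕ) : 0 < M m N := by
  induction N with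
  | zero => simp [M]
  | succ k ih => exact Nat.mul_pos (lt_of_lt_of_le Nat.zero_lt_two (hm2 k)) ih

lemma M_mono (hm2 : ∀ k, 2 ≤ m k) {a b : ℕ} (h : a ≤ b) : M m a ≤ M m b := by
  induction b with
  | zero => simpa [Nat.le_zero.mp h] using le_refl _
  | succ k ih =>
    rcases Nat.lt_or_ge a (k+1) with h' | h'
    · calc M m a ≤ M m k := ih (Nat.lt_succ_iff.mp h')
        _ ≤ m k * M m k := Nat.le_mul_of_pos_left _ (lt_of_lt_of_le Nat.zero_lt_two (hm2 k))
        _ = M m (k+1) := rfl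
    · have : a = k + 1 := le_antisymm h h'
      simp [this]

lemma two_pow_le_M (hm2 : ∀ k, 2 ≤ m k) (N : ℕ) : 2 ^ N ≤ M m N := by
  induction N with
  | zero => simp [M]
  | succ k ih =>
    calc 2 ^ (k+1) = 2 * 2 ^ k := by ring
      _ ≤ m k * M m k := Nat.mul_le_mul (hm2 k) ih
      _ = M m (k+1) := rfl

lemma lt_M_succ (hm2 : ∀ k, 2 ≤ m k) (n : ℕ) : n < M m (n + 1) :=
  lt_of_lt_of_le (Nat.lt_of_lt_of_le (Nat.lt_two_pow_self (n := n))
    (Nat.pow_le_pow_right (by norm_num) (Nat.le_succ n))) (two_pow_le_M hm2 (n+1))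

lemma digit_eq_zero_of_lt {n j : ℕ} (h : n < M m j) : digit m n j = 0 := by
  simp [digit, Nat.div_eq_of_lt h]

lemma mod_M_eq_sum (n N : ℕ) : n % M m N = ∑ k ∈ Finset.range N, digit m n k * M m k := by
  induction N with
  | zero => simp [M, Nat.mod_one]
  | succ k ih =>
    have : M m (k+1) = M m k * m k := Nat.mul_comm _ _
    rw [this, Nat.mod_mul, ih, Finset.sum_range_succ, digit]
    ring

lemma digit_inj (hm2 : ∀ k, 2 ≤ m k) {a b N : ℕ} (ha : a < M m N) (hb : b < M m N)
    (h : ∀ k < N, digit m a k = digit m b k) : a = b := by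
  have h1 : a % M m N = b % M m N := by
    rw [mod_M_eq_sum, mod_M_eq_sum]
    exact Finset.sum_congr rfl fun k hk => by rw [h k (Finset.mem_range.mp hk)]
  rwa [Nat.mod_eq_of_lt ha, Nat.mod_eq_of_lt hb] at h1

lemma psi_eq_prod (hm2 : ∀ k, 2 ≤ m k) (n : ℕ) (x : G m) {N : ℕ} (hN : n + 1 ≤ N) :
    psi m n x = ∏ k ∈ Finset.range N, rad m k x ^ digit m n k := by
  rw [psi]
  apply Finset.prod_subset (Finset.range_subset_range.mpr hN)
  intro k _ hk
  have hk' : n + 1 ≤ k := Nat.le_of_not_lt (fun h => hk (Finset.mem_range.mpr h))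
  have : n < M m k := lt_of_lt_of_le (lt_M_succ hm2 n) (M_mono hm2 hk')
  rw [digit_eq_zero_of_lt this, pow_zero]

lemma rad_eq (k : ℕ) (x : G m) :
    rad m k x = Complex.exp ((2 * Real.pi * ((x k).val : ℝ) / (m k : ℝ) : ℝ) * Complex.I) := by
  rw [rad]; congr 1; push_cast; ring

lemma norm_rad (k : ℕ) (x : G m) : ‖rad m k x‖ = 1 := by
  rw [rad_eq, Complex.norm_exp_ofReal_mul_I]

lemma rad_ne_zero (k : ℕ) (x : G m) : rad m k x ≠ 0 := Complex.exp_ne_zero _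

lemma exp_mod {c : ℕ} (hc : c ≠ 0) {p q : ℕ} (h : ((p : ZMod c) = (q : ZMod c))) :
    Complex.exp (2 * Real.pi * Complex.I * (p : ℂ) / (c : ℂ)) =
      Complex.exp (2 * Real.pi * Complex.I * (q : ℂ) / (c : ℂ)) := by
  have hmod : p ≡ q [MOD c] := (ZMod.natCast_eq_natCast_iff p q c).mp h
  obtain ⟨t, ht⟩ := hmod.dvd
  have hcc : (c : ℂ) ≠ 0 := Nat.cast_ne_zero.mpr hc
  have hpq : (q : ℂ) = (p : ℂ) + (c : ℂ) * (t : ℂ) := by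
    have : (q : ℤ) = (p : ℤ) + (c : ℤ) * t := by linarith [ht]
    exact_mod_cast congrArg (Int.cast : ℤ → ℂ) this
  rw [hpq]
  have : 2 * Real.pi * Complex.I * ((p : ℂ) + (c : ℂ) * (t : ℂ)) / (c : ℂ)
      = 2 * Real.pi * Complex.I * (p : ℂ) / (c : ℂ) + (t : ℂ) * (2 * Real.pi * Complex.I) := by
    field_simp
  rw [this, Complex.exp_add, Complex.exp_int_mul_two_pi_mul_I, mul_one]

lemma rad_sub (hm2 : ∀ k, 2 ≤ m k) (k : ℕ) (x u : G m) :
    rad m k (x - u) = rad m k x * (starRingEnd ℂ) (rad m k u) := by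
  have hc : m k ≠ 0 := by have := hm2 k; omega
  have : NeZero (m k) := ⟨hc⟩
  have key : rad m k (x - u) * rad m k u = rad m k x := by
    have hsub : (x - u) k = x k - u k := rfl
    rw [rad, rad, rad, hsub, ← Complex.exp_add]
    have : 2 * Real.pi * Complex.I * ((x k - u k).val : ℂ) / (m k : ℂ)
        + 2 * Real.pi * Complex.I * ((u k).val : ℂ) / (m k : ℂ)
        = 2 * Real.pi * Complex.I * ((((x k - u k).val + (u k).val : ℕ)) : ℂ) / (m k : ℂ) := by
      push_cast; ring
    rw [this]
    apply exp_mod hc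
    push_cast
    rw [ZMod.natCast_rightInverse (x k - u k), ZMod.natCast_rightInverse (u k),
      ZMod.natCast_rightInverse (x k)]
    exact sub_add_cancel _ _
  have hconj : (starRingEnd ℂ) (rad m k u) = (rad m k u)⁻¹ :=
    (Complex.inv_eq_conj (norm_rad k u)).symm
  rw [hconj, eq_comm, mul_inv_eq_iff_eq_mul₀ (rad_ne_zero k u), eq_comm]
  exact key

lemma psi_sub (hm2 : ∀ k, 2 ≤ m k) (n : ℕ) (x u : G m) :
    psi m n (x - u) = psi m n x * (starRingEnd ℂ) (psi m n u) := by
  rw [psi, psi, psi, map_prod, ← Finset.prod_mul_distrib]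
  refine Finset.prod_congr rfl fun k _ => ?_
  rw [rad_sub hm2, mul_pow, map_pow]

lemma measurable_rad (k : ℕ) : Measurable (rad m k) := by
  apply Complex.measurable_exp.comp
  apply Measurable.div_const
  apply Measurable.const_mul
  exact (Measurable.of_discrete (f := fun c : ZMod (m k) => ((c.val : ℕ) : ℂ))).comp
    (measurable_pi_apply k)

lemma measurable_psi (n : ℕ) : Measurable (psi m n) :=
  Finset.measurable_prod _ fun k _ => (measurable_rad k).pow_const _

lemma measurable_D (n : ℕ) : Measurable (D m n) :=
  Finset.measurable_sum _ fun k _ => measurable_psi k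

lemma norm_psi (n : ℕ) (x : G m) : ‖psi m n x‖ = 1 := by
  rw [psi]
  rw [norm_prod]
  refine Finset.prod_eq_one fun k _ => ?_
  rw [norm_pow, norm_rad, one_pow]

lemma norm_D_le (n : ℕ) (x : G m) : ‖D m n x‖ ≤ n := by
  rw [D]
  calc ‖∑ k ∈ Finset.range n, psi m k x‖ ≤ ∑ k ∈ Finset.range n, ‖psi m k x‖ :=
        norm_sum_le _ _
    _ = ∑ k ∈ Finset.range n, (1:ℝ) := by simp only [norm_psi]
    _ = n := by simp

lemma measurableSet_cyl (N : ℕ) (c : G m) : MeasurableSet {x : G m | ∀ j < N, x j = c j} := by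
  have : {x : G m | ∀ j < N, x j = c j} = ⋂ (j : ℕ) (_ : j < N), (fun x : G m => x j) ⁻¹' {c j} := by
    ext x; simp
  rw [this]
  exact MeasurableSet.iInter fun j => MeasurableSet.iInter fun _ =>
    (measurable_pi_apply j) (MeasurableSet.singleton (c j))

lemma integral_cyl (hm2 : ∀ k, 2 ≤ m k) (μ : Measure (G m)) [IsProbabilityMeasure μ]
    (hμ : ∀ (n : ℕ) (x : G m), μ {y : G m | ∀ j < n, y j = x j} = (M m n : ℝ≥0∞)⁻¹)
    [∀ k, NeZero (m k)] (N : ℕ) (g : ∀ k : ℕ, ZMod (m k) → ℂ) :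
    ∫ x, (∏ k ∈ Finset.range N, g k (x k)) ∂μ
      = ((M m N : ℝ)⁻¹ : ℂ) * ∏ j : Fin N, ∑ c : ZMod (m (j : ℕ)), g j c := by
  classical
  set T := ∀ j : Fin N, ZMod (m (j : ℕ)) with hT
  have hMpos : (0:ℕ) < M m N := M_pos hm2 N
  let ext : T → G m := fun t k => if h : k < N then t ⟨k, h⟩ else 0
  let C : T → Set (G m) := fun t => {x : G m | ∀ j < N, x j = ext t j}
  have hμC : ∀ t, μ (C t) = (M m N : ℝ≥0∞)⁻¹ := fun t => hμ N (ext t)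
  have hCmeas : ∀ t, MeasurableSet (C t) := fun t => measurableSet_cyl N (ext t)
  have hrepr : ∀ x : G m, (∏ k ∈ Finset.range N, g k (x k))
      = ∑ t : T, (C t).indicator (fun _ => ∏ j : Fin N, g (j : ℕ) (t j)) x := by
    intro x
    have hx : ∀ t : T, x ∈ C t ↔ t = fun j : Fin N => x (j : ℕ) := by
      intro t
      constructor
      · intro hxt
        funext j
        have := hxt (j : ℕ) j.isLt
        simp only [ext, dif_pos j.isLt] at this
        rw [this]
      · intro ht
        intro j hj
        simp [ht, ext, dif_pos hj]
    rw [Finset.sum_eq_single (fun j : Fin N => x (j : ℕ))]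
    · rw [Set.indicator_of_mem ((hx _).mpr rfl)]
      exact (Fin.prod_univ_eq_prod_range (fun k => g k (x k)) N).symm
    · intro t _ hne
      rw [Set.indicator_of_notMem (fun hmem => hne ((hx t).mp hmem))]
    · intro h; exact absurd (Finset.mem_univ _) h
  calc ∫ x, (∏ k ∈ Finset.range N, g k (x k)) ∂μ
      = ∫ x, ∑ t : T, (C t).indicator (fun _ => ∏ j : Fin N, g (j : ℕ) (t j)) x ∂μ := by
        congr 1; funext x; exact hrepr x
    _ = ∑ t : T, ∫ x, (C t).indicator (fun _ => ∏ j : Fin N, g (j : ℕ) (t j)) x ∂μ :=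
        integral_finset_sum _ fun t _ => (integrable_const _).indicator (hCmeas t)
    _ = ∑ t : T, ((M m N : ℝ)⁻¹ : ℂ) * ∏ j : Fin N, g (j : ℕ) (t j) := by
        refine Finset.sum_congr rfl fun t _ => ?_
        rw [integral_indicator_const _ (hCmeas t), measureReal_def, hμC t, ENNReal.toReal_inv,
          ENNReal.toReal_natCast, Complex.real_smul, Complex.ofReal_inv]
    _ = ((M m N : ℝ)⁻¹ : ℂ) * ∑ t : T, ∏ j : Fin N, g (j : ℕ) (t j) := by
        rw [Finset.mul_sum]
    _ = ((M m N : ℝ)⁻¹ : ℂ) * ∏ j : Fin N, ∑ c : ZMod (m (j : ℕ)), g j c := by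
        congr 1
        rw [Finset.prod_univ_sum (fun j : Fin N => (Finset.univ : Finset (ZMod (m (j:ℕ)))))
          (fun j c => g (j : ℕ) c)]
        rw [Fintype.piFinset_univ]

lemma M_eq_prod (N : ℕ) : M m N = ∏ k ∈ Finset.range N, m k := by
  induction N with
  | zero => simp [M]
  | succ k ih => rw [Finset.prod_range_succ, ← ih]; exact Nat.mul_comm _ _

lemma sum_char (hm2 : ∀ k, 2 ≤ m k) (j : ℕ) [NeZero (m j)] {p q : ℕ} (hp : p < m j) (hq : q < m j) :
    ∑ c : ZMod (m j),
        Complex.exp (2 * Real.pi * Complex.I * ((c.val : ℕ) : ℂ) / (m j : ℂ)) ^ p *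
          (starRingEnd ℂ) (Complex.exp (2 * Real.pi * Complex.I * ((c.val : ℕ) : ℂ) / (m j : ℂ))) ^ q
      = if p = q then (m j : ℂ) else 0 := by
  classical
  set n := m j with hn
  have hn0 : (n : ℂ) ≠ 0 := Nat.cast_ne_zero.mpr (NeZero.ne n)
  set d : ℤ := (p : ℤ) - (q : ℤ) with hd
  set ζ : ℂ := Complex.exp (2 * Real.pi * Complex.I * (d : ℂ) / (n : ℂ)) with hζ
  have hnorm : ∀ v : ℕ, ‖Complex.exp (2 * Real.pi * Complex.I * (v : ℂ) / (n : ℂ))‖ = 1 := by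
    intro v
    have : 2 * Real.pi * Complex.I * (v : ℂ) / (n : ℂ)
        = ((2 * Real.pi * (v : ℝ) / (n : ℝ) : ℝ) : ℂ) * Complex.I := by push_cast; ring
    rw [this, Complex.norm_exp_ofReal_mul_I]
  have hterm : ∀ v : ℕ,
      Complex.exp (2 * Real.pi * Complex.I * (v : ℂ) / (n : ℂ)) ^ p *
        (starRingEnd ℂ) (Complex.exp (2 * Real.pi * Complex.I * (v : ℂ) / (n : ℂ))) ^ q
      = ζ ^ v := by
    intro v
    set E := Complex.exp (2 * Real.pi * Complex.I * (v : ℂ) / (n : ℂ)) with hE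
    have hE0 : E ≠ 0 := Complex.exp_ne_zero _
    have hconj : (starRingEnd ℂ) E = E⁻¹ := (Complex.inv_eq_conj (hnorm v)).symm
    rw [hconj, inv_pow, ← zpow_natCast E p, ← zpow_natCast E q, ← zpow_neg,
      ← zpow_add₀ hE0]
    have : (p : ℤ) + (-(q : ℤ)) = d := by rw [hd]; ring
    rw [this, hE, ← Complex.exp_int_mul]
    have : (d : ℂ) * (2 * Real.pi * Complex.I * (v : ℂ) / (n : ℂ))
        = (v : ℂ) * (2 * Real.pi * Complex.I * (d : ℂ) / (n : ℂ)) := by ring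
    rw [this, Complex.exp_nat_mul, ← hζ]
  have hsum : ∑ c : ZMod n,
      Complex.exp (2 * Real.pi * Complex.I * ((c.val : ℕ) : ℂ) / (n : ℂ)) ^ p *
        (starRingEnd ℂ) (Complex.exp (2 * Real.pi * Complex.I * ((c.val : ℕ) : ℂ) / (n : ℂ))) ^ q
      = ∑ i ∈ Finset.range n, ζ ^ i := by
    rw [show (∑ c : ZMod n,
        Complex.exp (2 * Real.pi * Complex.I * ((c.val : ℕ) : ℂ) / (n : ℂ)) ^ p *
          (starRingEnd ℂ) (Complex.exp (2 * Real.pi * Complex.I * ((c.val : ℕ) : ℂ) / (n : ℂ))) ^ q)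
        = ∑ c : ZMod n, ζ ^ (c.val) from Finset.sum_congr rfl fun c _ => hterm c.val]
    exact Finset.sum_nbij' (fun c => ZMod.val c) (fun i => (i : ZMod n))
      (fun c _ => Finset.mem_range.mpr (ZMod.val_lt c))
      (fun i _ => Finset.mem_univ _)
      (fun c _ => ZMod.natCast_rightInverse c)
      (fun i hi => ZMod.val_cast_of_lt (Finset.mem_range.mp hi))
      (fun c _ => rfl)
  rw [hsum]
  by_cases hpq : p = q
  · have hd0 : d = 0 := by rw [hd, hpq]; ring
    have : ζ = 1 := by rw [hζ, hd0]; simp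
    rw [this]
    simp [hpq, hn]
  · have hd0 : d ≠ 0 := fun h => hpq (by omega)
    have hnd : ¬ ((n : ℤ) ∣ d) := by
      intro hdvd
      have h1 : |d| < (n : ℤ) := abs_lt.mpr (by omega)
      have h2 : (n : ℤ) ≤ |d| := Int.le_of_dvd (abs_pos.mpr hd0) ((dvd_abs _ _).mpr hdvd)
      omega
    have hζ1 : ζ ≠ 1 := by
      intro h1
      obtain ⟨t, ht⟩ := Complex.exp_eq_one_iff.mp (hζ ▸ h1)
      have h2π : (2 * (Real.pi : ℂ) * Complex.I) ≠ 0 := by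
        simp [Real.pi_ne_zero, Complex.I_ne_zero]
      have : (d : ℂ) = (t : ℂ) * (n : ℂ) := by
        field_simp at ht
        have ht' : 2 * (Real.pi : ℂ) * Complex.I * (d : ℂ)
            = 2 * (Real.pi : ℂ) * Complex.I * ((t : ℂ) * (n : ℂ)) := by
          rw [ht]; ring
        exact mul_left_cancel₀ h2π ht'
      have : d = t * n := by exact_mod_cast this
      exact hnd ⟨t, by rw [this, mul_comm]⟩
    rw [geom_sum_eq hζ1]
    have hζn : ζ ^ n = 1 := by
      rw [hζ, ← Complex.exp_nat_mul]
      have : (n : ℂ) * (2 * Real.pi * Complex.I * (d : ℂ) / (n : ℂ))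
          = (d : ℂ) * (2 * Real.pi * Complex.I) := by field_simp
      rw [this, Complex.exp_int_mul_two_pi_mul_I]
    rw [hζn, if_neg hpq]
    simp

lemma integral_psi_mul_conj (hm2 : ∀ k, 2 ≤ m k) (μ : Measure (G m)) [IsProbabilityMeasure μ]
    (hμ : ∀ (n : ℕ) (x : G m), μ {y : G m | ∀ j < n, y j = x j} = (M m n : ℝ≥0∞)⁻¹)
    (a b : ℕ) :
    ∫ x, psi m a x * (starRingEnd ℂ) (psi m b x) ∂μ = if a = b then 1 else 0 := by
  classical
  haveI : ∀ k, NeZero (m k) := fun k => ⟨by have := hm2 k; omega⟩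
  set N := max a b + 1 with hN
  have haN : a < M m N := lt_of_le_of_lt (le_max_left a b) (lt_M_succ hm2 (max a b))
  have hbN : b < M m N := lt_of_le_of_lt (le_max_right a b) (lt_M_succ hm2 (max a b))
  set g : ∀ k : ℕ, ZMod (m k) → ℂ := fun k c =>
    Complex.exp (2 * Real.pi * Complex.I * ((c.val : ℕ) : ℂ) / (m k : ℂ)) ^ digit m a k *
      (starRingEnd ℂ) (Complex.exp (2 * Real.pi * Complex.I * ((c.val : ℕ) : ℂ) / (m k : ℂ)))
        ^ digit m b k with hg
  have hfun : ∀ x : G m, psi m a x * (starRingEnd ℂ) (psi m b x)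
      = ∏ k ∈ Finset.range N, g k (x k) := by
    intro x
    rw [psi_eq_prod hm2 a x (by omega : a + 1 ≤ N), psi_eq_prod hm2 b x (by omega : b + 1 ≤ N),
      map_prod, ← Finset.prod_mul_distrib]
    exact Finset.prod_congr rfl fun k _ => by rw [hg, map_pow]; rfl
  have step : ∫ x, psi m a x * (starRingEnd ℂ) (psi m b x) ∂μ
      = ((M m N : ℝ)⁻¹ : ℂ) * ∏ j : Fin N, ∑ c : ZMod (m (j : ℕ)), g j c := by
    rw [show (fun x => psi m a x * (starRingEnd ℂ) (psi m b x))
        = fun x => ∏ k ∈ Finset.range N, g k (x k) from funext hfun]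
    exact integral_cyl hm2 μ hμ N g
  have hSj : ∀ j : Fin N, ∑ c : ZMod (m (j : ℕ)), g j c
      = if digit m a j = digit m b j then ((m (j : ℕ)) : ℂ) else 0 := by
    intro j
    have hmj : 0 < m (j : ℕ) := by have := hm2 (j : ℕ); omega
    exact sum_char hm2 (j : ℕ) (Nat.mod_lt _ hmj) (Nat.mod_lt _ hmj)
  rw [step]
  by_cases hab : a = b
  · subst hab
    have : ∏ j : Fin N, ∑ c : ZMod (m (j : ℕ)), g j c = (M m N : ℂ) := by
      rw [Finset.prod_congr rfl fun j _ => (hSj j).trans (if_pos rfl)]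
      rw [Fin.prod_univ_eq_prod_range (fun k => ((m k : ℕ) : ℂ)) N, ← Nat.cast_prod,
        ← M_eq_prod]
    rw [this, if_pos rfl]
    push_cast
    exact inv_mul_cancel₀ (by exact_mod_cast (M_pos hm2 N).ne')
  · obtain ⟨j₀, hj₀N, hj₀⟩ : ∃ j₀, j₀ < N ∧ digit m a j₀ ≠ digit m b j₀ := by
      by_contra h
      push_neg at h
      exact hab (digit_inj hm2 haN hbN fun k hk => h k hk)
    have : ∏ j : Fin N, ∑ c : ZMod (m (j : ℕ)), g j c = 0 :=
      Finset.prod_eq_zero (Finset.mem_univ (⟨j₀, hj₀N⟩ : Fin N))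
        ((hSj _).trans (if_neg hj₀))
    rw [this, if_neg hab, mul_zero]

lemma integrable_bdd {X : Type*} [MeasurableSpace X] (ν : Measure X) [IsFiniteMeasure ν]
    {f : X → ℂ} (hf : Measurable f) {C : ℝ} (h : ∀ x, ‖f x‖ ≤ C) : Integrable f ν :=
  ⟨hf.aestronglyMeasurable, HasFiniteIntegral.of_bounded (Filter.Eventually.of_forall h)⟩

lemma psi_zero (x : G m) : psi m 0 x = 1 := by
  simp [psi, digit]

lemma integral_psi (hm2 : ∀ k, 2 ≤ m k) (μ : Measure (G m)) [IsProbabilityMeasure μ]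
    (hμ : ∀ (n : ℕ) (x : G m), μ {y : G m | ∀ j < n, y j = x j} = (M m n : ℝ≥0∞)⁻¹) (l : ℕ) :
    ∫ x, psi m l x ∂μ = if l = 0 then 1 else 0 := by
  have h := integral_psi_mul_conj hm2 μ hμ l 0
  simpa [psi_zero] using h

lemma measurable_conj_psi (k : ℕ) : Measurable (fun x : G m => (starRingEnd ℂ) (psi m k x)) :=
  Complex.continuous_conj.measurable.comp (measurable_psi k)

lemma integral_D_mul_conj (hm2 : ∀ k, 2 ≤ m k) (μ : Measure (G m)) [IsProbabilityMeasure μ]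
    (hμ : ∀ (n : ℕ) (x : G m), μ {y : G m | ∀ j < n, y j = x j} = (M m n : ℝ≥0∞)⁻¹)
    {k i : ℕ} (h : k < i) :
    ∫ x, D m i x * (starRingEnd ℂ) (psi m k x) ∂μ = 1 := by
  classical
  have heq : (fun x => D m i x * (starRingEnd ℂ) (psi m k x))
      = fun x => ∑ l ∈ Finset.range i, psi m l x * (starRingEnd ℂ) (psi m k x) := by
    funext x; rw [D, Finset.sum_mul]
  rw [heq, integral_finset_sum _ (f := fun l x => psi m l x * (starRingEnd ℂ) (psi m k x))
      fun l _ => integrable_bdd μ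
      ((measurable_psi l).mul (measurable_conj_psi k)) (C := 1)
      (fun x => by rw [norm_mul, norm_psi, RCLike.norm_conj, norm_psi, one_mul])]
  rw [Finset.sum_congr rfl fun l _ => integral_psi_mul_conj hm2 μ hμ l k]
  rw [Finset.sum_ite_eq' (Finset.range i) k (fun _ => (1:ℂ))]
  rw [if_pos (Finset.mem_range.mpr h)]

lemma integral_D_one (hm2 : ∀ k, 2 ≤ m k) (μ : Measure (G m)) [IsProbabilityMeasure μ]
    (hμ : ∀ (n : ℕ) (x : G m), μ {y : G m | ∀ j < n, y j = x j} = (M m n : ℝ≥0∞)⁻¹)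
    {i : ℕ} (h : 1 ≤ i) :
    ∫ x, D m i x ∂μ = 1 := by
  classical
  simp only [D]
  rw [integral_finset_sum _ fun l _ => integrable_bdd μ (measurable_psi l) (C := 1)
      (fun x => le_of_eq (norm_psi l x))]
  rw [Finset.sum_congr rfl fun l _ => integral_psi hm2 μ hμ l]
  rw [Finset.sum_ite_eq' (Finset.range i) 0 (fun _ => (1:ℂ))]
  rw [if_pos (Finset.mem_range.mpr h)]

lemma integrable_prod_bdd (μ : Measure (G m)) [IsProbabilityMeasure μ] {f g : G m → ℂ}
    (hf : Measurable f) (hg : Measurable g) {C1 C2 : ℝ} (hC1 : 0 ≤ C1)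
    (h1 : ∀ x, ‖f x‖ ≤ C1) (h2 : ∀ x, ‖g x‖ ≤ C2) :
    Integrable (fun w : G m × G m => f w.1 * g w.2) (μ.prod μ) := by
  refine integrable_bdd _ ((hf.comp measurable_fst).mul (hg.comp measurable_snd)) (C := C1 * C2) ?_
  intro w
  rw [norm_mul]
  exact mul_le_mul (h1 _) (h2 _) (norm_nonneg _) hC1

lemma norm_DconjPsi_le (i k : ℕ) (x : G m) : ‖D m i x * (starRingEnd ℂ) (psi m k x)‖ ≤ i := by
  rw [norm_mul, RCLike.norm_conj, norm_psi, mul_one]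
  exact norm_D_le i x

lemma integral_DD_kernel (hm2 : ∀ k, 2 ≤ m k) (μ : Measure (G m)) [IsProbabilityMeasure μ]
    (hμ : ∀ (n : ℕ) (x : G m), μ {y : G m | ∀ j < n, y j = x j} = (M m n : ℝ≥0∞)⁻¹)
    {i j k₁ k₂ : ℕ} (h1 : k₁ < i) (h2 : k₂ < j) :
    ∫ w : G m × G m, D m i w.1 * D m j w.2 *
      ((starRingEnd ℂ) (psi m k₁ w.1) * (starRingEnd ℂ) (psi m k₂ w.2) - 1) ∂(μ.prod μ) = 0 := by
  have heq : (fun w : G m × G m => D m i w.1 * D m j w.2 *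
        ((starRingEnd ℂ) (psi m k₁ w.1) * (starRingEnd ℂ) (psi m k₂ w.2) - 1))
      = fun w => (fun x => D m i x * (starRingEnd ℂ) (psi m k₁ x)) w.1 *
            (fun y => D m j y * (starRingEnd ℂ) (psi m k₂ y)) w.2
          - (fun x => D m i x) w.1 * (fun y => D m j y) w.2 := funext fun w => by ring
  rw [heq, integral_sub
    (integrable_prod_bdd μ (f := fun x => D m i x * (starRingEnd ℂ) (psi m k₁ x))
        (g := fun y => D m j y * (starRingEnd ℂ) (psi m k₂ y)) ((measurable_D i).mul (measurable_conj_psi k₁))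
      ((measurable_D j).mul (measurable_conj_psi k₂)) (Nat.cast_nonneg i)
      (norm_DconjPsi_le i k₁) (norm_DconjPsi_le j k₂))
    (integrable_prod_bdd μ (measurable_D i) (measurable_D j) (Nat.cast_nonneg i)
      (norm_D_le i) (norm_D_le j))]
  have hA : (∫ w : G m × G m, D m i w.1 * (starRingEnd ℂ) (psi m k₁ w.1) *
        (D m j w.2 * (starRingEnd ℂ) (psi m k₂ w.2)) ∂μ.prod μ)
      = (∫ x, D m i x * (starRingEnd ℂ) (psi m k₁ x) ∂μ) *
        ∫ y, D m j y * (starRingEnd ℂ) (psi m k₂ y) ∂μ :=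
    integral_prod_mul (fun x => D m i x * (starRingEnd ℂ) (psi m k₁ x))
      (fun y => D m j y * (starRingEnd ℂ) (psi m k₂ y))
  have hB : (∫ w : G m × G m, D m i w.1 * D m j w.2 ∂μ.prod μ)
      = (∫ x, D m i x ∂μ) * ∫ y, D m j y ∂μ :=
    integral_prod_mul (fun x => D m i x) (fun y => D m j y)
  rw [hA, hB, integral_D_mul_conj hm2 μ hμ h1, integral_D_mul_conj hm2 μ hμ h2,
    integral_D_one hm2 μ hμ (by omega), integral_D_one hm2 μ hμ (by omega)]
  norm_num

lemma integrable_base (μ : Measure (G m)) [IsProbabilityMeasure μ] (i j k₁ k₂ : ℕ) :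
    Integrable (fun w : G m × G m => D m i w.1 * D m j w.2 *
      ((starRingEnd ℂ) (psi m k₁ w.1) * (starRingEnd ℂ) (psi m k₂ w.2) - 1)) (μ.prod μ) := by
  refine integrable_bdd _ ?_ (C := (i : ℝ) * j * 2) ?_
  · exact (((measurable_D i).comp measurable_fst).mul ((measurable_D j).comp measurable_snd)).mul
      ((((measurable_conj_psi k₁).comp measurable_fst).mul
        ((measurable_conj_psi k₂).comp measurable_snd)).sub measurable_const)
  · intro w
    have hc : ‖(starRingEnd ℂ) (psi m k₁ w.1) * (starRingEnd ℂ) (psi m k₂ w.2) - 1‖ ≤ 2 := by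
      calc ‖(starRingEnd ℂ) (psi m k₁ w.1) * (starRingEnd ℂ) (psi m k₂ w.2) - 1‖
          ≤ ‖(starRingEnd ℂ) (psi m k₁ w.1) * (starRingEnd ℂ) (psi m k₂ w.2)‖ + ‖(1:ℂ)‖ :=
            norm_sub_le _ _
        _ = 2 := by rw [norm_mul, RCLike.norm_conj, RCLike.norm_conj, norm_psi, norm_psi,
            norm_one]; norm_num
    calc ‖D m i w.1 * D m j w.2 *
          ((starRingEnd ℂ) (psi m k₁ w.1) * (starRingEnd ℂ) (psi m k₂ w.2) - 1)‖
        = ‖D m i w.1‖ * ‖D m j w.2‖ *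
            ‖(starRingEnd ℂ) (psi m k₁ w.1) * (starRingEnd ℂ) (psi m k₂ w.2) - 1‖ := by
          rw [norm_mul, norm_mul]
      _ ≤ (i : ℝ) * j * 2 := by
          refine mul_le_mul (mul_le_mul (norm_D_le i w.1) (norm_D_le j w.2) (norm_nonneg _)
            (Nat.cast_nonneg i)) hc (norm_nonneg _) (by positivity)

end Aux

theorem statement_13 (m : ℕ → ℕ) (hm2 : ∀ k, 2 ≤ m k) (hmbd : ∃ B, ∀ k, m k ≤ B)
    (μ : Measure (G m)) [IsProbabilityMeasure μ]
    (hμ : ∀ (n : ℕ) (x : G m), μ {y : G m | ∀ j < n, y j = x j} = (M m n : ℝ≥0∞)⁻¹)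
    (α β : ℝ) (hα : α ∈ Set.Ioo (0 : ℝ) 1) (hβ : β ∈ Set.Ioo (0 : ℝ) 1)
    (f : G m × G m → ℂ) (hf : MemLp f 1 (μ.prod μ))
    (n₁ n₂ r s : ℕ) (hn₁ : M m (r + 1) - 1 ≤ n₁) (hn₂ : M m (s + 1) - 1 ≤ n₂) :
    ∀ᵐ z ∂(μ.prod μ),
      (∫ w : G m × G m,
        (∑ i ∈ Finset.Icc (M m r) (M m (r + 1) - 1), ∑ j ∈ Finset.Icc (M m s) (M m (s + 1) - 1),
          ((A (-α - 1) (n₁ - i + 1) * A (-β - 1) (n₂ - j + 1) : ℝ) : ℂ) * D m i w.1 * D m j w.2) *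
          (partialSum2 m μ f (M m r) (M m s) (z.1 - w.1, z.2 - w.2)
            - partialSum2 m μ f (M m r) (M m s) z) ∂(μ.prod μ)) = 0 := by
  classical
  refine Filter.Eventually.of_forall fun z => ?_
  have hexpand : (fun w : G m × G m =>
      (∑ i ∈ Finset.Icc (M m r) (M m (r + 1) - 1), ∑ j ∈ Finset.Icc (M m s) (M m (s + 1) - 1),
          ((A (-α - 1) (n₁ - i + 1) * A (-β - 1) (n₂ - j + 1) : ℝ) : ℂ) * D m i w.1 * D m j w.2) *
        (partialSum2 m μ f (M m r) (M m s) (z.1 - w.1, z.2 - w.2)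
          - partialSum2 m μ f (M m r) (M m s) z))
      = fun w : G m × G m =>
        ∑ i ∈ Finset.Icc (M m r) (M m (r + 1) - 1), ∑ j ∈ Finset.Icc (M m s) (M m (s + 1) - 1),
          ∑ k₁ ∈ Finset.range (M m r), ∑ k₂ ∈ Finset.range (M m s),
            (((A (-α - 1) (n₁ - i + 1) * A (-β - 1) (n₂ - j + 1) : ℝ) : ℂ) *
              (fhat2 m μ f k₁ k₂ * psi m k₁ z.1 * psi m k₂ z.2)) *
            (D m i w.1 * D m j w.2 *
              ((starRingEnd ℂ) (psi m k₁ w.1) * (starRingEnd ℂ) (psi m k₂ w.2) - 1)) := by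
    funext w
    simp only [partialSum2, psi_sub hm2]
    rw [← Finset.sum_sub_distrib]
    simp only [← Finset.sum_sub_distrib]
    simp only [Finset.sum_mul]
    simp only [Finset.mul_sum]
    refine Finset.sum_congr rfl fun i _ => Finset.sum_congr rfl fun j _ =>
      Finset.sum_congr rfl fun k₁ _ => Finset.sum_congr rfl fun k₂ _ => by ring
  rw [hexpand]
  rw [integral_finset_sum _ (fun i _ => integrable_finset_sum _ fun j _ =>
    integrable_finset_sum _ fun k₁ _ => integrable_finset_sum _ fun k₂ _ =>
      (integrable_base μ i j k₁ k₂).const_mul _)]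
  refine Finset.sum_eq_zero fun i hi => ?_
  rw [integral_finset_sum _ (fun j _ => integrable_finset_sum _ fun k₁ _ =>
    integrable_finset_sum _ fun k₂ _ => (integrable_base μ i j k₁ k₂).const_mul _)]
  refine Finset.sum_eq_zero fun j hj => ?_
  rw [integral_finset_sum _ (fun k₁ _ => integrable_finset_sum _ fun k₂ _ =>
    (integrable_base μ i j k₁ k₂).const_mul _)]
  refine Finset.sum_eq_zero fun k₁ hk₁ => ?_
  rw [integral_finset_sum _ (fun k₂ _ => (integrable_base μ i j k₁ k₂).const_mul _)]
  refine Finset.sum_eq_zero fun k₂ hk₂ => ?_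
  rw [integral_const_mul]
  have hk₁i : k₁ < i :=
    lt_of_lt_of_le (Finset.mem_range.mp hk₁) (Finset.mem_Icc.mp hi).1
  have hk₂j : k₂ < j :=
    lt_of_lt_of_le (Finset.mem_range.mp hk₂) (Finset.mem_Icc.mp hj).1
  rw [integral_DD_kernel hm2 μ hμ hk₁i hk₂j, mul_zero]

end Vilenkin
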